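/- On a two-item list {x,y} in the partial cost model, the randomized algorithm COMB that runs BIT with probability 4/5 and TS with probability 1/5 is strictly 1.6-competitive. -/

import Mathlib

/-- Position (index in `τ`) of the `q`-th request to `b` (1-based `q`). -/
def occPos (τ : List Bool) (b : Bool) (q : ℕ) : ℕ :=
  ((List.range τ.length).filter (fun m => decide (τ[m]? = some b))).getD (q - 1) 0

/-- Two-item list state (`true` = `x` in front) of the critical request algorithm with
critical request functions `Fx`, `Fy` after serving `τ`, starting from the initial
state `init`: the item whose critical request is more recent is in front; an item
without critical request is behind one with a critical request, and if neither item
has a critical request the initial order persists. -/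
def critFront (init : Bool) (Fx Fy : ℕ → ℕ) (τ : List Bool) : Bool :=
  let qx := Fx (τ.count true)
  let qy := Fy (τ.count false)
  if qx = 0 then (if qy = 0 then init else false)
  else if qy = 0 then true
  else decide (occPos τ false qy < occPos τ true qx)

/-- Cost, in the partial cost model, of serving `σ` on the two-item list with online
state function `S` (front item after each prefix): 1 per change of state plus 1 per
request served at the rear position. -/
def cost2 (S : List Bool → Bool) (σ : List Bool) : ℕ :=
  ∑ m ∈ Finset.range σ.length,
    ((if S (σ.take m) = S (σ.take (m + 1)) then 0 else 1) +
     (if S (σ.take (m + 1)) = σ.getD m true then 0 else 1))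

/-- Optimal offline cost on the two-item list. -/
noncomputable def opt2 (s0 : Bool) (σ : List Bool) : ℕ :=
  sInf { c | ∃ f : ℕ → Bool,
    c = ∑ m ∈ Finset.range σ.length,
      ((if (if m = 0 then s0 else f (m - 1)) = f m then 0 else 1) +
       (if f m = σ.getD m true then 0 else 1)) }

/-- Critical request function of BIT with initial bit `b`: the critical request is
the last or second-to-last request, as `f(x^i) = (b + i) mod 2`. -/
def Fbit (b : Bool) (n : ℕ) : ℕ :=
  n - ((if b then 1 else 0) + n) % 2

/-- Critical request function of TS: `f(x^i) = 1`, i.e. the critical request is the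
second-to-last request. -/
def Fts (n : ℕ) : ℕ := n - 1

-- ### occurrence list lemmas
def occList (τ : List Bool) (b : Bool) : List ℕ :=
  (List.range τ.length).filter (fun m => decide (τ[m]? = some b))

lemma occPos_def (τ : List Bool) (b : Bool) (q : ℕ) :
    occPos τ b q = (occList τ b).getD (q - 1) 0 := rfl

lemma occList_append (τ : List Bool) (r b : Bool) :
    occList (τ ++ [r]) b = occList τ b ++ (if r = b then [τ.length] else []) := by
  unfold occList
  rw [List.length_append, List.length_singleton, List.range_succ, List.filter_append]
  congr 1
  · apply List.filter_congr
    intro m hm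
    rw [List.mem_range] at hm
    rw [List.getElem?_append_left hm]
  · simp only [List.filter_singleton]
    rw [List.getElem?_concat_length]
    by_cases h : r = b
    · simp [h]
    · simp [h, Ne.symm h]

lemma occList_length (τ : List Bool) (b : Bool) :
    (occList τ b).length = τ.count b := by
  induction τ using List.reverseRecOn with
  | nil => rfl
  | append_singleton σ r ih =>
    rw [occList_append, List.length_append, ih, List.count_append]
    by_cases h : r = b
    · cases h; simp
    · simp [h, List.count_singleton', Ne.symm h]

lemma occList_mem_lt (τ : List Bool) (b : Bool) {p : ℕ} (hp : p ∈ occList τ b) :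
    p < τ.length := by
  have := List.mem_filter.1 hp
  exact List.mem_range.1 this.1

lemma occPos_lt (τ : List Bool) (b : Bool) {q : ℕ} (h1 : 1 ≤ q) (h2 : q ≤ τ.count b) :
    occPos τ b q < τ.length := by
  have hlen : q - 1 < (occList τ b).length := by rw [occList_length]; omega
  rw [occPos_def]
  exact occList_mem_lt τ b (by rw [List.getD_eq_getElem _ _ hlen]; exact List.getElem_mem _)

lemma occPos_append (τ : List Bool) (r b : Bool) {q : ℕ} (h1 : 1 ≤ q) (h2 : q ≤ τ.count b) :
    occPos (τ ++ [r]) b q = occPos τ b q := by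
  rw [occPos_def, occPos_def, occList_append]
  exact List.getD_append _ _ _ _ (by rw [occList_length]; omega)

lemma occPos_append_self (τ : List Bool) (b : Bool) :
    occPos (τ ++ [b]) b (τ.count b + 1) = τ.length := by
  rw [occPos_def, occList_append, if_pos rfl]
  rw [List.getD_append_right _ _ _ _ (by rw [occList_length]; omega)]
  rw [occList_length]
  simp



def capv (n : ℕ) : ℕ := if n ≤ 1 then n else 2 + n % 2

def cap (n : ℕ) : Fin 4 := ⟨capv n, by unfold capv; split <;> omega⟩

abbrev AbsSt := Fin 4 × Fin 4 × Bool × Bool × Bool × Bool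

def bcomp (σ : List Bool) (i j : ℕ) : Bool :=
  decide (j ≤ σ.count true) &&
  (decide (i ≤ σ.count false) &&
   decide (occPos σ false (σ.count false + 1 - i) < occPos σ true (σ.count true + 1 - j)))

def absOf (σ : List Bool) : AbsSt :=
  ⟨cap (σ.count true), cap (σ.count false), bcomp σ 1 1, bcomp σ 1 2, bcomp σ 2 1, bcomp σ 2 2⟩

def capstep (a : Fin 4) : Fin 4 :=
  if a.val = 0 then 1 else if a.val = 1 then 2 else if a.val = 2 then 3 else 2

def stepA (s : AbsSt) (r : Bool) : AbsSt :=
  match s, r with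
  | ⟨nx, ny, b11, _b12, b21, _b22⟩, true =>
      ⟨capstep nx, ny, decide (1 ≤ ny.val), b11, decide (2 ≤ ny.val), b21⟩
  | ⟨nx, ny, b11, b12, _b21, _b22⟩, false =>
      ⟨nx, capstep ny, false, false, b11, b12⟩

lemma cap_val (n : ℕ) : (cap n).val = capv n := rfl

lemma capv_le (n k : ℕ) (hk : k ≤ 2) : k ≤ capv n ↔ k ≤ n := by
  unfold capv; split <;> omega

lemma cap_succ (n : ℕ) : cap (n + 1) = capstep (cap n) := by
  apply Fin.ext
  rw [cap_val]
  unfold capstep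
  rw [cap_val]
  unfold capv
  split_ifs <;> simp_all <;> omega

lemma count_append_true_t (σ : List Bool) : (σ ++ [true]).count true = σ.count true + 1 := by simp
lemma count_append_true_f (σ : List Bool) : (σ ++ [true]).count false = σ.count false := by simp
lemma count_append_false_t (σ : List Bool) : (σ ++ [false]).count true = σ.count true := by simp
lemma count_append_false_f (σ : List Bool) : (σ ++ [false]).count false = σ.count false + 1 := by simp

lemma absOf_append (σ : List Bool) (r : Bool) :
    absOf (σ ++ [r]) = stepA (absOf σ) r := by
  cases r
  case false =>
    have hb1 : ∀ j, 1 ≤ j → j ≤ 2 → bcomp (σ ++ [false]) 1 j = false := by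
      intro j h1 h2
      unfold bcomp
      rw [count_append_false_t, count_append_false_f]
      by_cases hj : j ≤ σ.count true
      · have e1 : σ.count false + 1 + 1 - 1 = σ.count false + 1 := by omega
        rw [e1, occPos_append_self]
        have e2 : σ.count true + 1 - j ≥ 1 ∧ σ.count true + 1 - j ≤ σ.count true := by omega
        rw [occPos_append σ false true e2.1 e2.2]
        have hlt : occPos σ true (σ.count true + 1 - j) < σ.length := occPos_lt σ true e2.1 e2.2
        simp [hj]
        omega
      · simp [hj]
    have hb2 : ∀ j, 1 ≤ j → j ≤ 2 → bcomp (σ ++ [false]) 2 j = bcomp σ 1 j := by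
      intro j h1 h2
      unfold bcomp
      rw [count_append_false_t, count_append_false_f]
      by_cases hj : j ≤ σ.count true
      · by_cases hm : 1 ≤ σ.count false
        · have e1 : σ.count false + 1 + 1 - 2 = σ.count false + 1 - 1 := by omega
          rw [e1]
          have e2 : σ.count false + 1 - 1 ≥ 1 ∧ σ.count false + 1 - 1 ≤ σ.count false := by omega
          rw [occPos_append σ false false e2.1 e2.2]
          have e3 : σ.count true + 1 - j ≥ 1 ∧ σ.count true + 1 - j ≤ σ.count true := by omega
          rw [occPos_append σ false true e3.1 e3.2]
          have : decide (2 ≤ σ.count false + 1) = decide (1 ≤ σ.count false) :=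
            decide_eq_decide.mpr (by omega)
          rw [this]
        · have h2' : ¬ (2 ≤ σ.count false + 1) := by omega
          have h1' : ¬ (1 ≤ σ.count false) := hm
          simp [h2', h1']
      · simp [hj]
    show absOf (σ ++ [false]) = ⟨(absOf σ).1, capstep (absOf σ).2.1, false, false,
        (absOf σ).2.2.1, (absOf σ).2.2.2.1⟩
    unfold absOf
    rw [Prod.mk.injEq]
    refine ⟨?_, ?_⟩
    · rw [count_append_false_t]
    rw [Prod.mk.injEq]
    refine ⟨?_, ?_⟩
    · rw [count_append_false_f, cap_succ]
    rw [Prod.mk.injEq]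
    refine ⟨hb1 1 (by norm_num) (by norm_num), ?_⟩
    rw [Prod.mk.injEq]
    refine ⟨hb1 2 (by norm_num) (by norm_num), ?_⟩
    rw [Prod.mk.injEq]
    exact ⟨hb2 1 (by norm_num) (by norm_num), hb2 2 (by norm_num) (by norm_num)⟩
  case true =>
    have hb1 : ∀ i, 1 ≤ i → i ≤ 2 → bcomp (σ ++ [true]) i 1 = decide (i ≤ σ.count false) := by
      intro i h1 h2
      unfold bcomp
      rw [count_append_true_t, count_append_true_f]
      have e1 : σ.count true + 1 + 1 - 1 = σ.count true + 1 := by omega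
      rw [e1, occPos_append_self]
      by_cases hi : i ≤ σ.count false
      · have e2 : σ.count false + 1 - i ≥ 1 ∧ σ.count false + 1 - i ≤ σ.count false := by omega
        rw [occPos_append σ true false e2.1 e2.2]
        have hlt : occPos σ false (σ.count false + 1 - i) < σ.length := occPos_lt σ false e2.1 e2.2
        simp [hi]
        omega
      · simp [hi]
    have hb2 : ∀ i, 1 ≤ i → i ≤ 2 → bcomp (σ ++ [true]) i 2 = bcomp σ i 1 := by
      intro i h1 h2
      unfold bcomp
      rw [count_append_true_t, count_append_true_f]
      by_cases hi : i ≤ σ.count false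
      · by_cases hn : 1 ≤ σ.count true
        · have e1 : σ.count true + 1 + 1 - 2 = σ.count true + 1 - 1 := by omega
          rw [e1]
          have e2 : σ.count true + 1 - 1 ≥ 1 ∧ σ.count true + 1 - 1 ≤ σ.count true := by omega
          rw [occPos_append σ true true e2.1 e2.2]
          have e3 : σ.count false + 1 - i ≥ 1 ∧ σ.count false + 1 - i ≤ σ.count false := by omega
          rw [occPos_append σ true false e3.1 e3.2]
          have : decide (2 ≤ σ.count true + 1) = decide (1 ≤ σ.count true) :=
            decide_eq_decide.mpr (by omega)
          rw [this]
        · have h2' : ¬ (2 ≤ σ.count true + 1) := by omega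
          simp [h2', hn]
      · simp [hi]
    show absOf (σ ++ [true]) = ⟨capstep (absOf σ).1, (absOf σ).2.1,
        decide (1 ≤ (absOf σ).2.1.val), (absOf σ).2.2.1, decide (2 ≤ (absOf σ).2.1.val),
        (absOf σ).2.2.2.2.1⟩
    unfold absOf
    rw [Prod.mk.injEq]
    refine ⟨?_, ?_⟩
    · rw [count_append_true_t, cap_succ]
    rw [Prod.mk.injEq]
    refine ⟨?_, ?_⟩
    · rw [count_append_true_f]
    rw [Prod.mk.injEq]
    refine ⟨?_, ?_⟩
    · rw [hb1 1 (by norm_num) (by norm_num)]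
      simp [cap_val, capv_le]
    rw [Prod.mk.injEq]
    refine ⟨hb2 1 (by norm_num) (by norm_num), ?_⟩
    rw [Prod.mk.injEq]
    refine ⟨?_, hb2 2 (by norm_num) (by norm_num)⟩
    rw [hb1 2 (by norm_num) (by norm_num)]
    simp [cap_val, capv_le]

def frontOf (init : Bool) (Fx Fy : ℕ → ℕ) (s : AbsSt) : Bool :=
  if Fx s.1.val = 0 then (if Fy s.2.1.val = 0 then init else false)
  else if Fy s.2.1.val = 0 then true
  else if Fx s.1.val = s.1.val then
    (if Fy s.2.1.val = s.2.1.val then s.2.2.1 else s.2.2.2.2.1)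
  else
    (if Fy s.2.1.val = s.2.1.val then s.2.2.2.1 else s.2.2.2.2.2)

structure GoodF (F : ℕ → ℕ) : Prop where
  sub : ∀ n, F n = n ∨ (F n = n - 1 ∧ 1 ≤ n)
  zero_iff : ∀ n, F (capv n) = 0 ↔ F n = 0
  top_iff : ∀ n, 1 ≤ n → (F (capv n) = capv n ↔ F n = n)

lemma goodF_ts : GoodF Fts := by
  constructor
  · intro n; unfold Fts
    rcases Nat.eq_zero_or_pos n with h | h
    · left; omega
    · right; omega
  · intro n; unfold Fts capv; split <;> omega
  · intro n hn; unfold Fts capv; split <;> omega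

lemma goodF_bit (b : Bool) : GoodF (Fbit b) := by
  constructor
  · intro n; unfold Fbit
    cases b <;> simp <;> omega
  · intro n; unfold Fbit capv
    cases b <;> simp <;> split <;> omega
  · intro n hn; unfold Fbit capv
    cases b <;> simp <;> split <;> omega

lemma critFront_eq (init : Bool) (Fx Fy : ℕ → ℕ) (hx : GoodF Fx) (hy : GoodF Fy)
    (σ : List Bool) : critFront init Fx Fy σ = frontOf init Fx Fy (absOf σ) := by
  unfold critFront frontOf
  have p1 : (absOf σ).1.val = capv (σ.count true) := rfl
  have p2 : (absOf σ).2.1.val = capv (σ.count false) := rfl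
  rw [p1, p2]
  set n := σ.count true with hn
  set m := σ.count false with hm
  by_cases hqx : Fx n = 0
  · rw [if_pos ((hx.zero_iff n).mpr hqx), if_pos hqx]
    by_cases hqy : Fy m = 0
    · rw [if_pos ((hy.zero_iff m).mpr hqy), if_pos hqy]
    · rw [if_neg (fun h => hqy ((hy.zero_iff m).mp h)), if_neg hqy]
  · rw [if_neg (fun h => hqx ((hx.zero_iff n).mp h)), if_neg hqx]
    by_cases hqy : Fy m = 0
    · rw [if_pos ((hy.zero_iff m).mpr hqy), if_pos hqy]
    · rw [if_neg (fun h => hqy ((hy.zero_iff m).mp h)), if_neg hqy]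
      have hn1 : 1 ≤ n := by rcases hx.sub n with h | h <;> omega
      have hm1 : 1 ≤ m := by rcases hy.sub m with h | h <;> omega
      -- selection
      by_cases hxt : Fx n = n
      · rw [if_pos ((hx.top_iff n hn1).mpr hxt)]
        by_cases hyt : Fy m = m
        · rw [if_pos ((hy.top_iff m hm1).mpr hyt)]
          show _ = bcomp σ 1 1
          unfold bcomp
          have e1 : m + 1 - 1 = Fy m := by omega
          have e2 : n + 1 - 1 = Fx n := by omega
          rw [← hn, ← hm, e1, e2]
          simp [hn1, hm1, ← hn, ← hm]
        · rw [if_neg (fun h => hyt ((hy.top_iff m hm1).mp h))]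
          have hy2 : Fy m = m - 1 := by rcases hy.sub m with h | h <;> omega
          have hm2 : 2 ≤ m := by omega
          show _ = bcomp σ 2 1
          unfold bcomp
          have e1 : m + 1 - 2 = Fy m := by omega
          have e2 : n + 1 - 1 = Fx n := by omega
          rw [← hn, ← hm, e1, e2]
          simp [hn1, hm2, ← hn, ← hm]
      · rw [if_neg (fun h => hxt ((hx.top_iff n hn1).mp h))]
        have hx2 : Fx n = n - 1 := by rcases hx.sub n with h | h <;> omega
        have hn2 : 2 ≤ n := by omega
        by_cases hyt : Fy m = m
        · rw [if_pos ((hy.top_iff m hm1).mpr hyt)]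
          show _ = bcomp σ 1 2
          unfold bcomp
          have e1 : m + 1 - 1 = Fy m := by omega
          have e2 : n + 1 - 2 = Fx n := by omega
          rw [← hn, ← hm, e1, e2]
          simp [hn2, hm1, ← hn, ← hm]
        · rw [if_neg (fun h => hyt ((hy.top_iff m hm1).mp h))]
          have hy2 : Fy m = m - 1 := by rcases hy.sub m with h | h <;> omega
          have hm2 : 2 ≤ m := by omega
          show _ = bcomp σ 2 2
          unfold bcomp
          have e1 : m + 1 - 2 = Fy m := by omega
          have e2 : n + 1 - 2 = Fx n := by omega
          rw [← hn, ← hm, e1, e2]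
          simp [hn2, hm2, ← hn, ← hm]

def phiTabFF : List ℕ := [0, 0, 0, 0, 0, 0, 0, 0, 0, 0, 0, 0, 0, 0, 0, 0, 0, 0, 0, 0, 0, 0, 0, 0, 0, 0, 0, 0, 0, 0, 0, 0, 0, 0, 0, 0, 0, 0, 0, 0, 0, 0, 0, 0, 0, 0, 0, 0, 0, 0, 0, 0, 0, 0, 0, 0, 0, 0, 0, 0, 0, 0, 0, 0, 3, 3, 3, 3, 3, 3, 3, 3, 3, 3, 3, 3, 3, 3, 3, 3, 1, 1, 1, 1, 1, 1, 1, 1, 3, 3, 3, 3, 3, 3, 3, 3, 0, 0, 1, 1, 0, 0, 1, 1, 4, 4, 3, 3, 4, 4, 3, 3, 0, 0, 1, 1, 0, 0, 1, 1, 4, 4, 3, 3, 4, 4, 3, 3, 8, 8, 8, 8, 8, 8, 8, 8, 8, 8, 8, 8, 8, 8, 8, 8, 3, 3, 3, 3, 6, 6, 6, 6, 5, 5, 5, 5, 8, 8, 8, 8, 0, 2, 1, 3, 5, 5, 6, 6, 4, 4, 3, 5, 7, 7, 8, 8, 0, 2, 1, 3, 5, 5, 6, 6, 4, 4, 3, 5,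 7, 7, 8, 8, 8, 8, 8, 8, 8, 8, 8, 8, 8, 8, 8, 8, 8, 8, 8, 8, 3, 3, 3, 3, 6, 6, 6, 6, 5, 5, 5, 5, 8, 8, 8, 8, 0, 2, 1, 3, 5, 5, 6, 6, 4, 4, 3, 5, 7, 7, 8, 8, 0, 2, 1, 3, 5, 5, 6, 6, 4, 4, 3, 5, 7, 7, 8, 8]

def phiTabFT : List ℕ := [8, 8, 8, 8, 8, 8, 8, 8, 8, 8, 8, 8, 8, 8, 8, 8, 8, 8, 8, 8, 8, 8, 8, 8, 8, 8, 8, 8, 8, 8, 8, 8, 8, 8, 8, 8, 8, 8, 8, 8, 8, 8, 8, 8, 8, 8, 8, 8, 8, 8, 8, 8, 8, 8, 8, 8, 8, 8, 8, 8, 8, 8, 8, 8, 3, 3, 3, 3, 3, 3, 3, 3, 3, 3, 3, 3, 3, 3, 3, 3, 5, 5, 5, 5, 5, 5, 5, 5, 3, 3, 3, 3, 3, 3, 3, 3, 8, 8, 5, 5, 8, 8, 5, 5, 6, 6, 3, 3, 6, 6, 3, 3, 8, 8, 5, 5, 8, 8, 5, 5, 6, 6, 3, 3, 6, 6, 3,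 3, 0, 0, 0, 0, 0, 0, 0, 0, 0, 0, 0, 0, 0, 0, 0, 0, 3, 3, 3, 3, 4, 4, 4, 4, 1, 1, 1, 1, 0, 0, 0, 0, 8, 8, 5, 3, 7, 7, 4, 4, 6, 6, 3, 1, 5, 5, 2, 0, 8, 8, 5, 3, 7, 7, 4, 4, 6, 6, 3, 1, 5, 5, 2, 0, 0, 0, 0, 0, 0, 0, 0, 0, 0, 0, 0, 0, 0, 0, 0, 0, 3, 3, 3, 3, 4, 4, 4, 4, 1, 1, 1, 1, 0, 0, 0, 0, 8, 8, 5, 3, 7, 7, 4, 4, 6, 6, 3, 1, 5, 5, 2, 0, 8, 8, 5, 3, 7, 7, 4, 4, 6, 6, 3, 1, 5, 5, 2, 0]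

def phiTabTF : List ℕ := [8, 8, 8, 8, 8, 8, 8, 8, 8, 8, 8, 8, 8, 8, 8, 8, 3, 3, 3, 3, 3, 3, 3, 3, 3, 3, 3, 3, 3, 3, 3, 3, 0, 0, 0, 0, 0, 0, 0, 0, 0, 0, 0, 0, 0, 0, 0, 0, 0, 0, 0, 0, 0, 0, 0, 0, 0, 0, 0, 0, 0, 0, 0, 0, 8, 8, 8, 8, 8, 8, 8, 8, 8, 8, 8, 8, 8, 8, 8, 8, 3, 3, 3, 3, 3, 3, 3, 3, 5, 5, 5, 5, 5, 5, 5, 5, 0, 0, 1, 1, 0, 0, 1, 1, 4, 4, 3, 3, 4, 4, 3, 3, 0, 0, 1, 1, 0, 0, 1, 1, 4, 4, 3, 3, 4, 4, 3, 3, 8, 8, 8, 8, 8, 8, 8, 8, 8, 8, 8, 8, 8, 8, 8, 8, 3, 3, 3, 3, 6, 6, 6, 6, 5, 5, 5, 5, 8, 8, 8, 8, 0, 2, 1, 3, 5, 5, 6, 6, 4, 4, 3, 5, 7, 7, 8, 8, 0, 2, 1, 3, 5, 5, 6, 6, 4, 4, 3, 5, 7, 7, 8, 8, 8, 8, 8,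 8, 8, 8, 8, 8, 8, 8, 8, 8, 8, 8, 8, 8, 3, 3, 3, 3, 6, 6, 6, 6, 5, 5, 5, 5, 8, 8, 8, 8, 0, 2, 1, 3, 5, 5, 6, 6, 4, 4, 3, 5, 7, 7, 8, 8, 0, 2, 1, 3, 5, 5, 6, 6, 4, 4, 3, 5, 7, 7, 8, 8]

def phiTabTT : List ℕ := [0, 0, 0, 0, 0, 0, 0, 0, 0, 0, 0, 0, 0, 0, 0, 0, 3, 3, 3, 3, 3, 3, 3, 3, 3, 3, 3, 3, 3, 3, 3, 3, 8, 8, 8, 8, 8, 8, 8, 8, 8, 8, 8, 8, 8, 8, 8, 8, 8, 8, 8, 8, 8, 8, 8, 8, 8, 8, 8, 8, 8, 8, 8, 8, 0, 0, 0, 0, 0, 0, 0, 0, 0, 0, 0, 0, 0, 0, 0, 0, 3, 3, 3, 3, 3, 3, 3, 3, 1, 1, 1, 1, 1, 1, 1, 1, 8, 8, 5, 5, 8, 8, 5, 5, 6, 6, 3, 3, 6, 6, 3, 3, 8, 8, 5, 5, 8, 8, 5, 5, 6, 6, 3, 3, 6, 6, 3, 3, 0, 0, 0, 0, 0, 0,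 0, 0, 0, 0, 0, 0, 0, 0, 0, 0, 3, 3, 3, 3, 4, 4, 4, 4, 1, 1, 1, 1, 0, 0, 0, 0, 8, 8, 5, 3, 7, 7, 4, 4, 6, 6, 3, 1, 5, 5, 2, 0, 8, 8, 5, 3, 7, 7, 4, 4, 6, 6, 3, 1, 5, 5, 2, 0, 0, 0, 0, 0, 0, 0, 0, 0, 0, 0, 0, 0, 0, 0, 0, 0, 3, 3, 3, 3, 4, 4, 4, 4, 1, 1, 1, 1, 0, 0, 0, 0, 8, 8, 5, 3, 7, 7, 4, 4, 6, 6, 3, 1, 5, 5, 2, 0, 8, 8, 5, 3, 7, 7, 4, 4, 6, 6, 3, 1, 5, 5, 2, 0]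


def stepCost (init : Bool) (Fx Fy : ℕ → ℕ) (s : AbsSt) (r : Bool) : ℕ :=
  (if frontOf init Fx Fy s = frontOf init Fx Fy (stepA s r) then 0 else 1) +
  (if frontOf init Fx Fy (stepA s r) = r then 0 else 1)

def combStep (init : Bool) (s : AbsSt) (r : Bool) : ℕ :=
  stepCost init (Fbit false) (Fbit false) s r + stepCost init (Fbit false) (Fbit true) s r +
  stepCost init (Fbit true) (Fbit false) s r + stepCost init (Fbit true) (Fbit true) s r +
  stepCost init Fts Fts s r

def idxA (s : AbsSt) : ℕ :=
  ((((s.1.val * 4 + s.2.1.val) * 2 + cond s.2.2.1 1 0) * 2 + cond s.2.2.2.1 1 0) * 2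
      + cond s.2.2.2.2.1 1 0) * 2 + cond s.2.2.2.2.2 1 0

def phi5 (init : Bool) (s : AbsSt) (o : Bool) : ℕ :=
  (match init, o with
   | false, false => phiTabFF
   | false, true => phiTabFT
   | true, false => phiTabTF
   | true, true => phiTabTT).getD (idxA s) 0

set_option maxRecDepth 10000 in
lemma step_ineq : ∀ (init r o o' : Bool) (s : AbsSt),
    combStep init s r + phi5 init (stepA s r) o' ≤
      8 * ((if o = o' then 0 else 1) + (if o' = r then 0 else 1)) + phi5 init s o := by
  decide

lemma phi5_start (init : Bool) : phi5 init (absOf []) init = 0 := by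
  cases init <;> rfl

-- ### cost bookkeeping
lemma cost2_append (S : List Bool → Bool) (σ : List Bool) (r : Bool) :
    cost2 S (σ ++ [r]) = cost2 S σ +
      ((if S σ = S (σ ++ [r]) then 0 else 1) + (if S (σ ++ [r]) = r then 0 else 1)) := by
  unfold cost2
  rw [List.length_append, List.length_singleton, Finset.sum_range_succ]
  congr 1
  · apply Finset.sum_congr rfl
    intro m hm
    rw [Finset.mem_range] at hm
    rw [List.take_append_of_le_length (by omega), List.take_append_of_le_length (by omega),
        List.getD_append _ _ _ _ (by omega)]
  · rw [List.take_append_of_le_length (le_refl _), List.take_length,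
        List.take_of_length_le (by simp),
        List.getD_append_right _ _ _ _ (le_refl _)]
    simp

def offC (s0 : Bool) (f : ℕ → Bool) (σ : List Bool) : ℕ :=
  ∑ m ∈ Finset.range σ.length,
    ((if (if m = 0 then s0 else f (m - 1)) = f m then 0 else 1) +
     (if f m = σ.getD m true then 0 else 1))

def offFr (init : Bool) (f : ℕ → Bool) (σ : List Bool) : Bool :=
  if σ.length = 0 then init else f (σ.length - 1)

lemma offC_append (s0 : Bool) (f : ℕ → Bool) (σ : List Bool) (r : Bool) :
    offC s0 f (σ ++ [r]) = offC s0 f σ +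
      ((if offFr s0 f σ = f σ.length then 0 else 1) + (if f σ.length = r then 0 else 1)) := by
  unfold offC offFr
  rw [List.length_append, List.length_singleton, Finset.sum_range_succ]
  congr 1
  · apply Finset.sum_congr rfl
    intro m hm
    rw [Finset.mem_range] at hm
    rw [List.getD_append _ _ _ _ (by omega)]
  · rw [List.getD_append_right _ _ _ _ (le_refl _)]
    by_cases h : σ.length = 0 <;> simp [h]

lemma cost2_step (init : Bool) (Fx Fy : ℕ → ℕ) (hx : GoodF Fx) (hy : GoodF Fy)
    (σ : List Bool) (r : Bool) :
    cost2 (critFront init Fx Fy) (σ ++ [r]) =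
      cost2 (critFront init Fx Fy) σ + stepCost init Fx Fy (absOf σ) r := by
  rw [cost2_append]
  unfold stepCost
  rw [critFront_eq init Fx Fy hx hy σ, critFront_eq init Fx Fy hx hy (σ ++ [r]),
      absOf_append]

def C5 (init : Bool) (σ : List Bool) : ℕ :=
  cost2 (critFront init (Fbit false) (Fbit false)) σ +
  cost2 (critFront init (Fbit false) (Fbit true)) σ +
  cost2 (critFront init (Fbit true) (Fbit false)) σ +
  cost2 (critFront init (Fbit true) (Fbit true)) σ +
  cost2 (critFront init Fts Fts) σ

lemma C5_append (init : Bool) (σ : List Bool) (r : Bool) :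
    C5 init (σ ++ [r]) = C5 init σ + combStep init (absOf σ) r := by
  unfold C5 combStep
  rw [cost2_step init _ _ (goodF_bit false) (goodF_bit false),
      cost2_step init _ _ (goodF_bit false) (goodF_bit true),
      cost2_step init _ _ (goodF_bit true) (goodF_bit false),
      cost2_step init _ _ (goodF_bit true) (goodF_bit true),
      cost2_step init _ _ goodF_ts goodF_ts]
  ring

lemma main_ineq (init : Bool) (f : ℕ → Bool) (σ : List Bool) :
    C5 init σ + phi5 init (absOf σ) (offFr init f σ) ≤ 8 * offC init f σ := by
  induction σ using List.reverseRecOn with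
  | nil =>
    have h1 : C5 init [] = 0 := by simp [C5, cost2]
    have h2 : offC init f [] = 0 := by simp [offC]
    have h3 : offFr init f [] = init := rfl
    rw [h1, h2, h3, phi5_start]
  | append_singleton σ r ih =>
    rw [C5_append, offC_append, absOf_append]
    have ho' : offFr init f (σ ++ [r]) = f σ.length := by
      unfold offFr
      rw [List.length_append, List.length_singleton]
      simp
    rw [ho']
    have key := step_ineq init r (offFr init f σ) (f σ.length) (absOf σ)
    omega

/-- On a two-item list in the partial cost model, COMB — run BIT
(with both bits uniformly random) with probability 4/5 and TS with probability 1/5 —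
is strictly 1.6-competitive, for both initial list states. -/
theorem comb_strictly_16_competitive (init : Bool) (σ : List Bool) :
    (4 / 5 : ℝ) *
        ((1 / 4) * ∑ p : Bool × Bool,
          (cost2 (critFront init (Fbit p.1) (Fbit p.2)) σ : ℝ)) +
      (1 / 5) * (cost2 (critFront init Fts Fts) σ : ℝ)
      ≤ 1.6 * (opt2 init σ : ℝ) := by
  obtain ⟨f, hf⟩ : ∃ f : ℕ → Bool, opt2 init σ = offC init f σ := by
    have hmem := Nat.sInf_mem (s := { c | ∃ f : ℕ → Bool,
        c = ∑ m ∈ Finset.range σ.length,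
          ((if (if m = 0 then init else f (m - 1)) = f m then 0 else 1) +
           (if f m = σ.getD m true then 0 else 1)) })
      ⟨offC init (fun _ => true) σ, ⟨fun _ => true, rfl⟩⟩
    obtain ⟨f, hf⟩ := hmem
    exact ⟨f, hf⟩
  have hmain := main_ineq init f σ
  have hnat : C5 init σ ≤ 8 * offC init f σ := by omega
  have h2 : (C5 init σ : ℝ) ≤ 8 * (opt2 init σ : ℝ) := by
    rw [hf]
    exact_mod_cast hnat
  have e : ∑ p : Bool × Bool, (cost2 (critFront init (Fbit p.1) (Fbit p.2)) σ : ℝ)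
      = (cost2 (critFront init (Fbit false) (Fbit false)) σ : ℝ)
        + (cost2 (critFront init (Fbit false) (Fbit true)) σ : ℝ)
        + (cost2 (critFront init (Fbit true) (Fbit false)) σ : ℝ)
        + (cost2 (critFront init (Fbit true) (Fbit true)) σ : ℝ) := by
    rw [Fintype.sum_prod_type, Fintype.sum_bool, Fintype.sum_bool, Fintype.sum_bool]
    ring
  have hC5 : (C5 init σ : ℝ)
      = (cost2 (critFront init (Fbit false) (Fbit false)) σ : ℝ)
        + (cost2 (critFront init (Fbit false) (Fbit true)) σ : ℝ)
        + (cost2 (critFront init (Fbit true) (Fbit false)) σ : ℝ)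
        + (cost2 (critFront init (Fbit true) (Fbit true)) σ : ℝ)
        + (cost2 (critFront init Fts Fts) σ : ℝ) := by
    unfold C5
    push_cast
    ring
  rw [e]
  linarith [h2, hC5]
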